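/- Let k ≥ 3 be an odd integer and χ a real non-principal Dirichlet character modulo q. For every complex number s with Re(s) > 1, ∑_{n=1}^{∞} μ^(k)(n)·g_χ(n)·n^{−s} = ( L(s, χ) / L(ks, χ) ) · ( P(s) / P(ks) ), where L(s,χ) is the Dirichlet L-function of χ and P(s) = ∏_{p ∣ q} (1 − p^{−s})^{−1}. -/

import Mathlib

open Complex Finset
open scoped Classical

open scoped LSeries.notation ArithmeticFunction

section Aux

/-- A completely multiplicative function applied to a list product. -/
lemma aux_list_prod (g : ℕ → ℂ) (hg1 : g 1 = 1)
    (hgmul : ∀ m n : ℕ, g (m * n) = g m * g n) :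
    ∀ l : List ℕ, g l.prod = (l.map g).prod := by
  intro l
  induction l with
  | nil => simpa using hg1
  | cons a t ih => simp [hgmul, ih]

lemma aux_squarefree_prod_primes {S : Finset ℕ} (hS : ∀ p ∈ S, p.Prime) :
    Squarefree (∏ p ∈ S, p) := by
  classical
  induction S using Finset.induction_on with
  | empty => simpa using squarefree_one
  | @insert a s ha ih =>
    rw [Finset.prod_insert ha, Nat.squarefree_mul_iff]
    have hap : a.Prime := hS a (Finset.mem_insert_self a s)
    have hs' : ∀ p ∈ s, p.Prime := fun p hp => hS p (Finset.mem_insert_of_mem hp)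
    refine ⟨?_, hap.squarefree, ih hs'⟩
    rw [Nat.Prime.coprime_iff_not_dvd hap]
    intro hdvd
    rcases (Nat.Prime.prime hap).dvd_finset_prod_iff _ |>.mp hdvd with ⟨p, hp, hap'⟩
    exact ha (((hs' p hp).dvd_iff_eq hap.ne_one).mp hap' ▸ hp)

/-- The sum of the Möbius function over `d` with `d ^ k ∣ n` detects `k`-free numbers. -/
lemma aux_kfree_moebius_sum {k n : ℕ} (hk : k ≠ 0) (hn : n ≠ 0) :
    (∑ d ∈ n.divisors.filter (fun d => d ^ k ∣ n), ArithmeticFunction.moebius d)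
      = if ∀ p : ℕ, p.Prime → ¬ p ^ k ∣ n then 1 else 0 := by
  classical
  set S := n.primeFactors.filter (fun p => p ^ k ∣ n) with hSdef
  have hSp : ∀ p ∈ S, p.Prime := fun p hp =>
    Nat.prime_of_mem_primeFactors (Finset.mem_filter.mp hp).1
  set R := ∏ p ∈ S, p with hRdef
  have hRsq : Squarefree R := aux_squarefree_prod_primes hSp
  have hRfac : R.primeFactors = S := Nat.primeFactors_prod hSp
  have hR0 : R ≠ 0 := hRsq.ne_zero
  have seteq : (n.divisors.filter (fun d => d ^ k ∣ n)).filter Squarefree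
      = R.divisors.filter Squarefree := by
    ext d
    simp only [Finset.mem_filter, Nat.mem_divisors]
    constructor
    · rintro ⟨⟨⟨hdn, -⟩, hdkn⟩, hsq⟩
      refine ⟨⟨?_, hR0⟩, hsq⟩
      have hsub : d.primeFactors ⊆ S := by
        intro p hp
        have hpp : p.Prime := Nat.prime_of_mem_primeFactors hp
        have hpd : p ∣ d := Nat.dvd_of_mem_primeFactors hp
        have hpk : p ^ k ∣ n := dvd_trans (pow_dvd_pow_of_dvd hpd k) hdkn
        exact Finset.mem_filter.mpr
          ⟨Nat.mem_primeFactors.mpr ⟨hpp, hpd.trans hdn, hn⟩, hpk⟩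
      calc d = ∏ p ∈ d.primeFactors, p := (Nat.prod_primeFactors_of_squarefree hsq).symm
        _ ∣ ∏ p ∈ S, p := Finset.prod_dvd_prod_of_subset _ _ _ hsub
    · rintro ⟨⟨hdR, -⟩, hsq⟩
      have hd0 : d ≠ 0 := fun h => hR0 (Nat.eq_zero_of_zero_dvd (h ▸ hdR))
      have hdkn : d ^ k ∣ n := by
        rw [← Nat.factorization_le_iff_dvd (pow_ne_zero k hd0) hn]
        rw [Nat.factorization_pow]
        intro p
        by_cases hp : p ∈ d.primeFactors
        · have hpp : p.Prime := Nat.prime_of_mem_primeFactors hp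
          have hpS : p ∈ S := by
            rw [← hRfac]
            exact Nat.mem_primeFactors.mpr
              ⟨hpp, (Nat.dvd_of_mem_primeFactors hp).trans hdR, hR0⟩
          have hpk : p ^ k ∣ n := (Finset.mem_filter.mp hpS).2
          have hle : k ≤ n.factorization p := (hpp.pow_dvd_iff_le_factorization hn).mp hpk
          have hone : d.factorization p ≤ 1 := hsq.natFactorization_le_one p
          simp only [Finsupp.smul_apply, smul_eq_mul]
          calc k * d.factorization p ≤ k * 1 := Nat.mul_le_mul_left k hone
            _ = k := Nat.mul_one k
            _ ≤ n.factorization p := hle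
        · have : d.factorization p = 0 := by
            rw [← Nat.support_factorization] at hp
            exact Finsupp.notMem_support_iff.mp hp
          simp [this]
      exact ⟨⟨⟨dvd_trans (dvd_pow_self d hk) hdkn, hn⟩, hdkn⟩, hsq⟩
  have step1 : (∑ d ∈ n.divisors.filter (fun d => d ^ k ∣ n), ArithmeticFunction.moebius d)
      = ∑ d ∈ R.divisors, ArithmeticFunction.moebius d := by
    rw [← Finset.sum_filter_of_ne
      (s := n.divisors.filter (fun d => d ^ k ∣ n)) (p := Squarefree)
      (fun x _ hx => ArithmeticFunction.moebius_ne_zero_iff_squarefree.mp hx)]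
    rw [← Finset.sum_filter_of_ne (s := R.divisors) (p := Squarefree)
      (fun x _ hx => ArithmeticFunction.moebius_ne_zero_iff_squarefree.mp hx)]
    rw [seteq]
  have step2 : (∑ d ∈ R.divisors, ArithmeticFunction.moebius d)
      = if R = 1 then 1 else 0 := by
    calc (∑ d ∈ R.divisors, ArithmeticFunction.moebius d)
        = (ArithmeticFunction.moebius * ↑ArithmeticFunction.zeta : ArithmeticFunction ℤ) R :=
          ArithmeticFunction.coe_mul_zeta_apply.symm
      _ = (1 : ArithmeticFunction ℤ) R := by rw [ArithmeticFunction.moebius_mul_coe_zeta]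
      _ = if R = 1 then 1 else 0 := ArithmeticFunction.one_apply
  have step3 : (R = 1) ↔ (∀ p : ℕ, p.Prime → ¬ p ^ k ∣ n) := by
    constructor
    · intro h1 p hp hpk
      have hpS : p ∈ S := Finset.mem_filter.mpr
        ⟨Nat.mem_primeFactors.mpr ⟨hp, dvd_trans (dvd_pow_self p hk) hpk, hn⟩, hpk⟩
      have hdvd : p ∣ R := Finset.dvd_prod_of_mem _ hpS
      rw [h1] at hdvd
      exact hp.ne_one (Nat.dvd_one.mp hdvd)
    · intro hall
      have : S = ∅ := Finset.eq_empty_of_forall_notMem fun p hp =>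
        hall p (hSp p hp) (Finset.mem_filter.mp hp).2
      rw [hRdef, this, Finset.prod_empty]
  rw [step1, step2, if_congr step3 rfl rfl]

end Aux

/-- Odd case Euler factorization: for `Re(s) > 1`,
`∑ μ^(k)(n) g_χ(n) n^{-s} = (L(s,χ)/L(ks,χ)) · (P(s)/P(ks))` with
`P(s) = ∏_{p ∣ q} (1 - p^{-s})⁻¹`. -/
theorem dirichlet_series_factorization_odd
    (k : ℕ) (hk : 3 ≤ k) (hkodd : Odd k)
    (q : ℕ) [NeZero q] (χ : DirichletCharacter ℂ q)
    (hχreal : ∀ n : ZMod q, χ n = -1 ∨ χ n = 0 ∨ χ n = 1) (hχ : χ ≠ 1)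
    (g : ℕ → ℂ) (hg1 : g 1 = 1)
    (hgmul : ∀ m n : ℕ, g (m * n) = g m * g n)
    (hgp : ∀ p : ℕ, p.Prime → g p = if p ∣ q then 1 else χ (p : ZMod q))
    (f : ℕ → ℂ)
    (hf : ∀ n : ℕ, f n = if ∀ p : ℕ, p.Prime → ¬ p ^ k ∣ n then g n else 0) :
    ∀ s : ℂ, 1 < s.re →
      ∑' n : ℕ, f n * (n : ℂ) ^ (-s)
        = (DirichletCharacter.LFunction χ s / DirichletCharacter.LFunction χ ((k : ℂ) * s))
            * ((∏ p ∈ q.primeFactors, (1 - (p : ℂ) ^ (-s))⁻¹)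
                / (∏ p ∈ q.primeFactors, (1 - (p : ℂ) ^ (-((k : ℂ) * s)))⁻¹)) := by
  classical
  have hk0 : k ≠ 0 := by omega
  -- the modified character as a function on ℕ
  set χf : ℕ → ℂ := fun n => χ ((n : ℕ) : ZMod q) with hχfdef
  have hχf1 : χf 1 = 1 := by simp [χf]
  have hχfmul : ∀ m n : ℕ, χf (m * n) = χf m * χf n := by
    intro m n; simp only [χf, Nat.cast_mul, map_mul]
  -- μ as a ℂ-valued function
  set μc : ℕ → ℂ := fun n => ((ArithmeticFunction.moebius n : ℤ) : ℂ) with hμcdef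
  set mg : ℕ → ℂ := fun n => μc n * g n with hmgdef
  set r : ℕ := ∏ p ∈ q.primeFactors, p with hrdef
  set hfun : ℕ → ℂ :=
    fun n => if hn : ∃ d : ℕ, d ^ k = n then μc hn.choose * g hn.choose else 0 with hhdef
  set mfun : ℕ → ℂ := fun n => if n ∣ r then μc n else 0 with hmfdef
  -- basic facts
  have hq0 : q ≠ 0 := NeZero.ne q
  have hrprimes : ∀ p ∈ q.primeFactors, p.Prime := fun p hp => Nat.prime_of_mem_primeFactors hp
  have hrsq : Squarefree r := aux_squarefree_prod_primes hrprimes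
  have hr0 : r ≠ 0 := hrsq.ne_zero
  have hrfac : r.primeFactors = q.primeFactors := Nat.primeFactors_prod hrprimes
  have hgpm : ∀ p : ℕ, p.Prime → g p = 1 ∨ g p = -1 := by
    intro p hp
    rw [hgp p hp]
    split_ifs with h
    · exact Or.inl rfl
    · have hu : IsUnit ((p : ℕ) : ZMod q) := by
        rw [ZMod.isUnit_iff_coprime]
        exact (Nat.Prime.coprime_iff_not_dvd hp).mpr h
      have hne : χ ((p : ℕ) : ZMod q) ≠ 0 := by
        obtain ⟨u, hu'⟩ := hu
        have h1 : χ ((u : ZMod q) * ((u⁻¹ : (ZMod q)ˣ) : ZMod q)) = 1 := by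
          rw [Units.mul_inv]; exact map_one χ
        rw [map_mul] at h1
        intro h0
        rw [hu', h0, zero_mul] at h1
        exact one_ne_zero h1.symm
      rcases hχreal ((p : ℕ) : ZMod q) with h' | h' | h'
      · exact Or.inr h'
      · exact absurd h' hne
      · exact Or.inl h'
  have hgsqp : ∀ p : ℕ, p.Prime → g p * g p = 1 := by
    intro p hp; rcases hgpm p hp with h | h <;> rw [h] <;> ring
  have hgsql : ∀ l : List ℕ, (∀ p ∈ l, p.Prime) → g l.prod * g l.prod = 1 := by
    intro l
    induction l with
    | nil => intro _; simp [hg1]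
    | cons a t ih =>
      intro hmem
      have ha := hmem a List.mem_cons_self
      have h2 := ih (fun p hp => hmem p (List.mem_cons_of_mem a hp))
      simp only [List.prod_cons, hgmul]
      calc (g a * g t.prod) * (g a * g t.prod)
          = (g a * g a) * (g t.prod * g t.prod) := by ring
        _ = 1 := by rw [hgsqp a ha, h2, one_mul]
  have hgsq : ∀ n : ℕ, n ≠ 0 → g n * g n = 1 := by
    intro n hn
    have := hgsql n.primeFactorsList (fun p hp => Nat.prime_of_mem_primeFactorsList hp)
    rwa [Nat.prod_primeFactorsList hn] at this
  have hgnorm : ∀ n : ℕ, n ≠ 0 → ‖g n‖ = 1 := by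
    intro n hn
    have h1 : ‖g n‖ * ‖g n‖ = 1 := by
      rw [← norm_mul, hgsq n hn, norm_one]
    rcases mul_self_eq_one_iff.mp h1 with h | h
    · exact h
    · nlinarith [norm_nonneg (g n)]
  have hgpow : ∀ (n j : ℕ), g (n ^ j) = g n ^ j := by
    intro n j
    induction j with
    | zero => simpa using hg1
    | succ j ih => rw [pow_succ, pow_succ, hgmul, ih]
  have hgk : ∀ n : ℕ, n ≠ 0 → g (n ^ k) = g n := by
    intro n hn
    obtain ⟨j, hj⟩ := hkodd
    rw [hgpow, hj, pow_add, pow_mul, pow_one, pow_two, hgsq n hn, one_pow, one_mul]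
  have hμnorm : ∀ n : ℕ, ‖μc n‖ ≤ 1 := by
    intro n
    by_cases hsq : Squarefree n
    · rw [hμcdef]
      simp only [ArithmeticFunction.moebius_apply_of_squarefree hsq]
      push_cast
      simp
    · simp [hμcdef, ArithmeticFunction.moebius_eq_zero_of_not_squarefree hsq]
  -- Möbius divisor sums
  have hμsum : ∀ N : ℕ, (∑ d ∈ N.divisors, μc d) = if N = 1 then 1 else 0 := by
    intro N
    have h1 : (∑ d ∈ N.divisors, ArithmeticFunction.moebius d) = if N = 1 then 1 else 0 := by
      calc (∑ d ∈ N.divisors, ArithmeticFunction.moebius d)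
          = (ArithmeticFunction.moebius * ↑ArithmeticFunction.zeta : ArithmeticFunction ℤ) N :=
            ArithmeticFunction.coe_mul_zeta_apply.symm
        _ = (1 : ArithmeticFunction ℤ) N := by rw [ArithmeticFunction.moebius_mul_coe_zeta]
        _ = if N = 1 then 1 else 0 := ArithmeticFunction.one_apply
    have : ((∑ d ∈ N.divisors, ArithmeticFunction.moebius d : ℤ) : ℂ)
        = ((if N = 1 then 1 else 0 : ℤ) : ℂ) := by rw [h1]
    simp only [hμcdef]
    rw [← Int.cast_sum, h1]
    split_ifs <;> simp
  -- g is 1 on divisors of r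
  have hgr : ∀ b : ℕ, b ∣ r → g b = 1 := by
    have hlist : ∀ l : List ℕ, (∀ p ∈ l, p.Prime ∧ p ∣ q) → g l.prod = 1 := by
      intro l
      induction l with
      | nil => simpa using hg1
      | cons a t ih =>
        intro hmem
        obtain ⟨hap, haq⟩ := hmem a List.mem_cons_self
        have h2 := ih (fun p hp => hmem p (List.mem_cons_of_mem a hp))
        simp only [List.prod_cons, hgmul, h2, mul_one]
        rw [hgp a hap, if_pos haq]
    intro b hb
    have hb0 : b ≠ 0 := fun h => hr0 (Nat.eq_zero_of_zero_dvd (h ▸ hb))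
    have := hlist b.primeFactorsList (fun p hp => by
      have hpp := Nat.prime_of_mem_primeFactorsList hp
      have hpb : p ∣ b := Nat.dvd_of_mem_primeFactorsList hp
      have hpr : p ∈ r.primeFactors := Nat.mem_primeFactors.mpr ⟨hpp, hpb.trans hb, hr0⟩
      rw [hrfac] at hpr
      exact ⟨hpp, Nat.dvd_of_mem_primeFactors hpr⟩)
    rwa [Nat.prod_primeFactorsList hb0] at this
  -- g agrees with χf on numbers coprime to q
  have hgχ : ∀ n : ℕ, n ≠ 0 → Nat.Coprime n q → g n = χf n := by
    have hlist : ∀ l : List ℕ, (∀ p ∈ l, p.Prime ∧ ¬ p ∣ q) → g l.prod = χf l.prod := by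
      intro l
      induction l with
      | nil => simp [hg1, hχf1]
      | cons a t ih =>
        intro hmem
        obtain ⟨hap, haq⟩ := hmem a List.mem_cons_self
        have h2 := ih (fun p hp => hmem p (List.mem_cons_of_mem a hp))
        simp only [List.prod_cons, hgmul, hχfmul, h2]
        rw [hgp a hap, if_neg haq]
    intro n hn hcop
    have := hlist n.primeFactorsList (fun p hp => by
      have hpp := Nat.prime_of_mem_primeFactorsList hp
      have hpn : p ∣ n := Nat.dvd_of_mem_primeFactorsList hp
      refine ⟨hpp, fun hpq => ?_⟩
      have : p ∣ Nat.gcd n q := Nat.dvd_gcd hpn hpq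
      rw [hcop] at this
      exact hpp.ne_one (Nat.dvd_one.mp this))
    rwa [Nat.prod_primeFactorsList hn] at this
  -- norms
  have hχfnorm : ∀ n : ℕ, ‖χf n‖ ≤ 1 := by
    intro n
    rcases hχreal ((n : ℕ) : ZMod q) with h | h | h <;>
      simp [χf, h]
  have hmgnorm : ∀ n : ℕ, n ≠ 0 → ‖mg n‖ ≤ 1 := by
    intro n hn
    rw [hmgdef]
    simp only [norm_mul]
    calc ‖μc n‖ * ‖g n‖ ≤ 1 * 1 := by
          apply mul_le_mul (hμnorm n) (le_of_eq (hgnorm n hn)) (norm_nonneg _) zero_le_one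
      _ = 1 := one_mul 1
  have hhval : ∀ d : ℕ, hfun (d ^ k) = μc d * g d := by
    intro d
    have hex : ∃ e : ℕ, e ^ k = d ^ k := ⟨d, rfl⟩
    rw [hhdef]
    simp only [dif_pos hex]
    have : hex.choose = d := Nat.pow_left_injective (by omega) hex.choose_spec
    rw [this]
  have hhnorm : ∀ n : ℕ, n ≠ 0 → ‖hfun n‖ ≤ 1 := by
    intro n hn
    rw [hhdef]
    by_cases hex : ∃ d : ℕ, d ^ k = n
    · simp only [dif_pos hex]
      have hd0 : hex.choose ≠ 0 := by
        intro h0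
        apply hn
        rw [← hex.choose_spec, h0, zero_pow hk0]
      calc ‖μc hex.choose * g hex.choose‖ = ‖μc hex.choose‖ * ‖g hex.choose‖ := norm_mul _ _
        _ ≤ 1 * 1 := mul_le_mul (hμnorm _) (le_of_eq (hgnorm _ hd0)) (norm_nonneg _) zero_le_one
        _ = 1 := one_mul 1
    · simp [dif_neg hex]
  have hmfnorm : ∀ n : ℕ, n ≠ 0 → ‖mfun n‖ ≤ 1 := by
    intro n hn
    rw [hmfdef]
    by_cases hd : n ∣ r
    · simpa [if_pos hd] using hμnorm n
    · simp [if_neg hd]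
  have hgnorm' : ∀ n : ℕ, n ≠ 0 → ‖g n‖ ≤ 1 := fun n hn => le_of_eq (hgnorm n hn)
  -- summability
  have hsummable : ∀ (F : ℕ → ℂ), (∀ n : ℕ, n ≠ 0 → ‖F n‖ ≤ 1) → ∀ z : ℂ, 1 < z.re →
      LSeriesSummable F z := by
    intro F hF z hz
    exact LSeriesSummable_of_bounded_of_one_lt_re (fun n hn => hF n hn) hz
  intro s hs
  have hks : 1 < ((k : ℂ) * s).re := by
    have h1 : ((k : ℂ) * s).re = (k : ℝ) * s.re := by
      simp [Complex.mul_re]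
    rw [h1]
    have hk3 : (3 : ℝ) ≤ (k : ℝ) := by exact_mod_cast hk
    nlinarith
  -- convolution identity I : f = g ⍟ hfun
  have conv1 : ∀ n : ℕ, n ≠ 0 → f n = (g ⍟ hfun) n := by
    intro n hn
    simp only [LSeries.convolution_def]
    rw [Nat.sum_divisorsAntidiagonal' (f := fun a b => g a * hfun b)]
    have hstep : (∑ b ∈ n.divisors, g (n / b) * hfun b)
        = ∑ b ∈ n.divisors.filter (fun b => ∃ d : ℕ, d ^ k = b), g (n / b) * hfun b := by
      rw [Finset.sum_filter_of_ne]
      intro b _ hb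
      by_contra hex
      apply hb
      rw [hhdef]
      simp only [dif_neg hex, mul_zero]
    have himg : n.divisors.filter (fun b => ∃ d : ℕ, d ^ k = b)
        = (n.divisors.filter (fun d => d ^ k ∣ n)).image (fun d => d ^ k) := by
      ext b
      simp only [Finset.mem_filter, Finset.mem_image, Nat.mem_divisors]
      constructor
      · rintro ⟨⟨hbn, -⟩, d, hd⟩
        exact ⟨d, ⟨⟨(dvd_pow_self d hk0).trans (hd ▸ hbn), hn⟩, hd ▸ hbn⟩, hd⟩
      · rintro ⟨d, ⟨⟨-, -⟩, hdk⟩, hd⟩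
        exact ⟨⟨hd ▸ hdk, hn⟩, d, hd⟩
    rw [hstep, himg, Finset.sum_image (fun x _ y _ h => Nat.pow_left_injective (by omega) h)]
    have hterm : ∀ d ∈ n.divisors.filter (fun d => d ^ k ∣ n),
        g (n / d ^ k) * hfun (d ^ k) = μc d * g n := by
      intro d hd
      obtain ⟨hdmem, hdk⟩ := Finset.mem_filter.mp hd
      have hd0 : d ≠ 0 := Nat.pos_of_mem_divisors hdmem |>.ne'
      rw [hhval d]
      have hgn : g n = g d * g (n / d ^ k) := by
        conv_lhs => rw [← Nat.mul_div_cancel' hdk]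
        rw [hgmul, hgk d hd0]
      rw [hgn]; ring
    rw [Finset.sum_congr rfl hterm, ← Finset.sum_mul]
    have hcore : (∑ d ∈ n.divisors.filter (fun d => d ^ k ∣ n), μc d)
        = if ∀ p : ℕ, p.Prime → ¬ p ^ k ∣ n then 1 else 0 := by
      have := aux_kfree_moebius_sum hk0 hn
      have hcast : ((∑ d ∈ n.divisors.filter (fun d => d ^ k ∣ n),
          ArithmeticFunction.moebius d : ℤ) : ℂ)
          = (((if ∀ p : ℕ, p.Prime → ¬ p ^ k ∣ n then 1 else 0 : ℤ)) : ℂ) := by rw [this]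
      simp only [hμcdef]
      rw [← Int.cast_sum, this]
      split_ifs <;> simp
    rw [hcore, hf n]
    split_ifs <;> simp
  -- convolution identity II : mg ⍟ g = δ
  have conv2 : ∀ z : ℂ, 1 < z.re → LSeries mg z * LSeries g z = 1 := by
    intro z hz
    have hpt : ∀ n : ℕ, n ≠ 0 → LSeries.delta n = (mg ⍟ g) n := by
      intro n hn
      simp only [LSeries.convolution_def]
      rw [Nat.sum_divisorsAntidiagonal (f := fun a b => mg a * g b)]
      have hterm : ∀ a ∈ n.divisors, mg a * g (n / a) = μc a * g n := by
        intro a ha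
        have han : a ∣ n := (Nat.mem_divisors.mp ha).1
        have hgn : g n = g a * g (n / a) := by
          conv_lhs => rw [← Nat.mul_div_cancel' han]
          rw [hgmul]
        rw [hmgdef, hgn]; ring
      rw [Finset.sum_congr rfl hterm, ← Finset.sum_mul, hμsum n]
      rw [LSeries.delta]
      split_ifs with h
      · simp [h, hg1]
      · simp
    calc LSeries mg z * LSeries g z = LSeries (mg ⍟ g) z :=
          (LSeries_convolution' (hsummable mg hmgnorm z hz) (hsummable g hgnorm' z hz)).symm
      _ = LSeries LSeries.delta z := (LSeries_congr (fun {n} hn => hpt n hn) z).symm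
      _ = 1 := by rw [LSeries_delta, Pi.one_apply]
  -- reindexing : LSeries hfun s = LSeries mg (k*s)
  have hre : LSeries hfun s = LSeries mg ((k : ℂ) * s) := by
    have hinj : Function.Injective (fun d : ℕ => d ^ k) :=
      Nat.pow_left_injective (by omega)
    have hsupp : Function.support (LSeries.term hfun s) ⊆ Set.range (fun d : ℕ => d ^ k) := by
      intro n hnsupp
      have hn0 : n ≠ 0 := by
        intro h
        apply hnsupp
        rw [h, LSeries.term_zero]
      have hterm := hnsupp
      rw [Function.mem_support, LSeries.term_of_ne_zero hn0] at hterm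
      have hfn : hfun n ≠ 0 := by
        intro h
        apply hterm
        rw [h, zero_div]
      rw [hhdef] at hfn
      by_cases hex : ∃ d : ℕ, d ^ k = n
      · obtain ⟨d, hd⟩ := hex
        exact ⟨d, hd⟩
      · exact absurd (dif_neg hex) hfn
    have := hinj.tsum_eq (f := LSeries.term hfun s) hsupp
    rw [LSeries, ← this]
    apply tsum_congr
    intro d
    rcases eq_or_ne d 0 with rfl | hd0
    · rw [zero_pow hk0, LSeries.term_zero, LSeries.term_zero]
    · have hdk0 : d ^ k ≠ 0 := pow_ne_zero k hd0
      rw [LSeries.term_of_ne_zero hdk0, LSeries.term_of_ne_zero hd0, hhval d]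
      congr 1
      rw [Nat.cast_pow, ← Complex.natCast_cpow_natCast_mul]
  -- L-series of mfun : finite Euler product
  have hmser : ∀ z : ℂ, 1 < z.re →
      LSeries mfun z = ∏ p ∈ q.primeFactors, (1 - (p : ℂ) ^ (-z)) := by
    intro z hz
    have hout : ∀ b ∉ r.divisors, LSeries.term mfun z b = 0 := by
      intro b hb
      rcases eq_or_ne b 0 with rfl | hb0
      · exact LSeries.term_zero _ _
      · have hbr : ¬ b ∣ r := fun hdvd => hb (Nat.mem_divisors.mpr ⟨hdvd, hr0⟩)
        rw [LSeries.term_of_ne_zero hb0, hmfdef]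
        simp [if_neg hbr]
    rw [LSeries, tsum_eq_sum hout]
    -- build the arithmetic function n ↦ n^{-z}
    set X : ArithmeticFunction ℂ :=
      ⟨fun n => if n = 0 then 0 else (n : ℂ) ^ (-z), if_pos rfl⟩ with hXdef
    have hXapply : ∀ n : ℕ, n ≠ 0 → X n = (n : ℂ) ^ (-z) := by
      intro n hn
      show (if n = 0 then 0 else (n : ℂ) ^ (-z)) = _
      rw [if_neg hn]
    have hXmult : X.IsMultiplicative := by
      constructor
      · show (if 1 = 0 then 0 else ((1 : ℕ) : ℂ) ^ (-z)) = 1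
        rw [if_neg one_ne_zero]
        simp
      · intro m n hcop
        rcases eq_or_ne m 0 with rfl | hm0
        · have hn1 : n = 1 := by simpa using hcop.symm
          subst hn1
          simp [ArithmeticFunction.map_zero]
        rcases eq_or_ne n 0 with rfl | hn0
        · have hm1 : m = 1 := by simpa using hcop
          subst hm1
          simp [ArithmeticFunction.map_zero]
        · rw [hXapply m hm0, hXapply n hn0, hXapply (m * n) (mul_ne_zero hm0 hn0)]
          push_cast
          exact Complex.natCast_mul_natCast_cpow m n (-z)
    have hkey := ArithmeticFunction.IsMultiplicative.prodPrimeFactors_one_sub_of_squarefree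
      X hXmult hrsq
    rw [hrfac] at hkey
    have hprod : ∏ p ∈ q.primeFactors, (1 - (p : ℂ) ^ (-z))
        = ∏ p ∈ q.primeFactors, (1 - X p) := by
      apply Finset.prod_congr rfl
      intro p hp
      rw [hXapply p (hrprimes p hp).ne_zero]
    rw [hprod, hkey]
    apply Finset.sum_congr rfl
    intro d hd
    have hd0 : d ≠ 0 := (Nat.pos_of_mem_divisors hd).ne'
    have hdr : d ∣ r := (Nat.mem_divisors.mp hd).1
    rw [LSeries.term_of_ne_zero hd0, hmfdef]
    simp only [if_pos hdr]
    rw [hXapply d hd0, hμcdef]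
    rw [Complex.cpow_neg, div_eq_mul_inv]
  -- convolution identity III : χf = g ⍟ mfun
  have conv3 : ∀ n : ℕ, n ≠ 0 → χf n = (g ⍟ mfun) n := by
    intro n hn
    simp only [LSeries.convolution_def]
    rw [Nat.sum_divisorsAntidiagonal' (f := fun a b => g a * mfun b)]
    have hstep : (∑ b ∈ n.divisors, g (n / b) * mfun b)
        = ∑ b ∈ n.divisors.filter (fun b => b ∣ r), g (n / b) * mfun b := by
      rw [Finset.sum_filter_of_ne]
      intro b _ hb
      by_contra hbr
      apply hb
      rw [hmfdef]
      simp only [if_neg hbr, mul_zero]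
    have hseteq : n.divisors.filter (fun b => b ∣ r) = (Nat.gcd n r).divisors := by
      ext b
      simp only [Finset.mem_filter, Nat.mem_divisors]
      constructor
      · rintro ⟨⟨hbn, -⟩, hbr⟩
        exact ⟨Nat.dvd_gcd hbn hbr, Nat.gcd_ne_zero_left hn⟩
      · rintro ⟨hb, -⟩
        exact ⟨⟨hb.trans (Nat.gcd_dvd_left n r), hn⟩, hb.trans (Nat.gcd_dvd_right n r)⟩
    have hterm : ∀ b ∈ n.divisors.filter (fun b => b ∣ r),
        g (n / b) * mfun b = μc b * g n := by
      intro b hb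
      obtain ⟨hbmem, hbr⟩ := Finset.mem_filter.mp hb
      have hbn : b ∣ n := (Nat.mem_divisors.mp hbmem).1
      have hgn : g n = g (n / b) := by
        conv_lhs => rw [← Nat.mul_div_cancel' hbn]
        rw [hgmul, hgr b hbr, one_mul]
      rw [hmfdef]
      simp only [if_pos hbr]
      rw [← hgn]; ring
    rw [hstep, Finset.sum_congr rfl hterm, ← Finset.sum_mul, hseteq, hμsum]
    by_cases hcop : Nat.Coprime n q
    · have hcr : Nat.gcd n r = 1 := by
        have : Nat.Coprime n r := Nat.Coprime.prod_right
          (fun p hp => Nat.Coprime.coprime_dvd_right (Nat.dvd_of_mem_primeFactors hp) hcop)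
        exact this
      rw [if_pos hcr, one_mul]
      exact (hgχ n hn hcop).symm
    · have hcr : Nat.gcd n r ≠ 1 := by
        intro h1
        apply hcop
        have hgcd1 : Nat.gcd n q ≠ 1 → False := fun hne => by
          obtain ⟨p, hpp, hpd⟩ := Nat.exists_prime_and_dvd hne
          have hpn : p ∣ n := hpd.trans (Nat.gcd_dvd_left n q)
          have hpq : p ∣ q := hpd.trans (Nat.gcd_dvd_right n q)
          have hpr : p ∣ r := Finset.dvd_prod_of_mem _
            (Nat.mem_primeFactors.mpr ⟨hpp, hpq, hq0⟩)
          have : p ∣ Nat.gcd n r := Nat.dvd_gcd hpn hpr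
          rw [h1] at this
          exact hpp.ne_one (Nat.dvd_one.mp this)
        by_contra hne
        exact hgcd1 hne
      rw [if_neg hcr, zero_mul]
      have hnu : ¬ IsUnit ((n : ℕ) : ZMod q) := by
        rw [ZMod.isUnit_iff_coprime]
        exact hcop
      rw [hχfdef]
      exact χ.map_nonunit hnu
  -- assemble : LSeries χf z = LSeries g z * M z
  have hLχ : ∀ z : ℂ, 1 < z.re →
      LSeries χf z = LSeries g z * ∏ p ∈ q.primeFactors, (1 - (p : ℂ) ^ (-z)) := by
    intro z hz
    calc LSeries χf z = LSeries (g ⍟ mfun) z :=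
          LSeries_congr (fun {n} hn => conv3 n hn) z
      _ = LSeries g z * LSeries mfun z :=
          LSeries_convolution' (hsummable g hgnorm' z hz) (hsummable mfun hmfnorm z hz)
      _ = LSeries g z * ∏ p ∈ q.primeFactors, (1 - (p : ℂ) ^ (-z)) := by rw [hmser z hz]
  -- nonvanishing of the finite products
  have hMne : ∀ z : ℂ, 1 < z.re → ∀ p ∈ q.primeFactors, (1 - (p : ℂ) ^ (-z)) ≠ 0 := by
    intro z hz p hp
    have hpp := hrprimes p hp
    have hlt : ‖(p : ℂ) ^ (-z)‖ < 1 := by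
      rw [Complex.norm_natCast_cpow_of_pos hpp.pos]
      have h2 : (1 : ℝ) < (p : ℝ) := by exact_mod_cast hpp.one_lt
      apply Real.rpow_lt_one_of_one_lt_of_neg h2
      simp only [Complex.neg_re]
      linarith
    intro h0
    have : (p : ℂ) ^ (-z) = 1 := by
      have := sub_eq_zero.mp h0
      exact this.symm
    rw [this, norm_one] at hlt
    exact lt_irrefl 1 hlt
  -- main computation
  have hsum_lhs : (∑' n : ℕ, f n * (n : ℂ) ^ (-s)) = LSeries f s := by
    apply tsum_congr
    intro n
    rcases eq_or_ne n 0 with rfl | hn0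
    · rw [LSeries.term_zero]
      have hf0 : f 0 = 0 := by
        rw [hf 0, if_neg]
        push_neg
        exact ⟨2, Nat.prime_two, dvd_zero _⟩
      rw [hf0, zero_mul]
    · rw [LSeries.term_of_ne_zero hn0, Complex.cpow_neg, div_eq_mul_inv]
  have hLf : LSeries f s = LSeries g s * LSeries mg ((k : ℂ) * s) := by
    calc LSeries f s = LSeries (g ⍟ hfun) s := LSeries_congr (fun {n} hn => conv1 n hn) s
      _ = LSeries g s * LSeries hfun s :=
          LSeries_convolution' (hsummable g hgnorm' s hs)
            (hsummable hfun hhnorm s hs)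
      _ = LSeries g s * LSeries mg ((k : ℂ) * s) := by rw [hre]
  have hGks_ne : LSeries g ((k : ℂ) * s) ≠ 0 := by
    intro h0
    have := conv2 ((k : ℂ) * s) hks
    rw [h0, mul_zero] at this
    exact zero_ne_one this
  have hmg_inv : LSeries mg ((k : ℂ) * s) = (LSeries g ((k : ℂ) * s))⁻¹ := by
    have := conv2 ((k : ℂ) * s) hks
    field_simp
    linear_combination this
  -- L-function values
  have hLs : DirichletCharacter.LFunction χ s
      = LSeries g s * ∏ p ∈ q.primeFactors, (1 - (p : ℂ) ^ (-s)) := by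
    rw [DirichletCharacter.LFunction_eq_LSeries χ hs]
    exact hLχ s hs
  have hLks : DirichletCharacter.LFunction χ ((k : ℂ) * s)
      = LSeries g ((k : ℂ) * s) * ∏ p ∈ q.primeFactors, (1 - (p : ℂ) ^ (-((k : ℂ) * s))) := by
    rw [DirichletCharacter.LFunction_eq_LSeries χ hks]
    exact hLχ ((k : ℂ) * s) hks
  rw [hsum_lhs, hLf, hmg_inv, hLs, hLks]
  have hMs_ne : (∏ p ∈ q.primeFactors, (1 - (p : ℂ) ^ (-s))) ≠ 0 :=
    Finset.prod_ne_zero_iff.mpr (hMne s hs)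
  have hMks_ne : (∏ p ∈ q.primeFactors, (1 - (p : ℂ) ^ (-((k : ℂ) * s)))) ≠ 0 :=
    Finset.prod_ne_zero_iff.mpr (hMne ((k : ℂ) * s) hks)
  rw [Finset.prod_inv_distrib, Finset.prod_inv_distrib]
  field_simp
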